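/- Let f_1, …, f_k be continuous self-maps of a compact metric space X extended periodically to f_{1,∞}. If the autonomous system (X, g) with g = f_k ∘ ⋯ ∘ f_1 is topologically ergodic, then the non-autonomous system (X, f_{1,∞}) is topologically ergodic. -/

import Mathlib

open Set Filter

open scoped Classical in
/-- Upper density of a set of naturals: `limsup |S ∩ {0,…,n-1}| / n`. -/
noncomputable def upperDensity (S : Set ℕ) : ℝ :=
  Filter.limsup (fun n : ℕ => (((Finset.range n).filter (· ∈ S)).card : ℝ) / n)
    Filter.atTop

/-- `ncomp f k n = f (k+n-1) ∘ ⋯ ∘ f k`; `ncomp f 1 n = f_1^n`. -/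
def ncomp {X : Type*} (f : ℕ → X → X) (k : ℕ) : ℕ → X → X
  | 0 => id
  | n + 1 => f (k + n) ∘ ncomp f k n

lemma ncomp_add {X : Type*} (f : ℕ → X → X) (n m : ℕ) :
    ncomp f 1 (n + m) = ncomp f (1 + n) m ∘ ncomp f 1 n := by
  induction m with
  | zero => rfl
  | succ m ih =>
    show f (1 + (n + m)) ∘ ncomp f 1 (n + m) = _
    rw [ih, ← add_assoc]
    rfl

lemma f_per {X : Type*} (k : ℕ) (f : ℕ → X → X)
    (hper : ∀ n, 1 ≤ n → f (n + k) = f n) :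
    ∀ j n, 1 ≤ n → f (n + k * j) = f n := by
  intro j
  induction j with
  | zero => simp
  | succ j ih =>
    intro n hn
    rw [Nat.mul_succ, ← add_assoc, hper _ (le_trans hn (Nat.le_add_right _ _)), ih n hn]

lemma ncomp_shift {X : Type*} (k : ℕ) (f : ℕ → X → X)
    (hper : ∀ n, 1 ≤ n → f (n + k) = f n) (j m : ℕ) :
    ncomp f (1 + k * j) m = ncomp f 1 m := by
  induction m with
  | zero => rfl
  | succ m ih =>
    show f (1 + k * j + m) ∘ _ = f (1 + m) ∘ _
    rw [ih, add_right_comm, f_per k f hper j (1 + m) (Nat.le_add_right _ _)]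

lemma ncomp_mul {X : Type*} (k : ℕ) (f : ℕ → X → X)
    (hper : ∀ n, 1 ≤ n → f (n + k) = f n) (j : ℕ) :
    ncomp f 1 (k * j) = (ncomp f 1 k)^[j] := by
  induction j with
  | zero => rw [Nat.mul_zero]; rfl
  | succ j ih =>
    rw [Nat.mul_succ, ncomp_add, ncomp_shift k f hper, ih,
      Function.iterate_succ']

theorem ergodic_of_composition_ergodic_periodic {X : Type*} [MetricSpace X]
    [CompactSpace X] (k : ℕ) (hk : 1 ≤ k) (f : ℕ → X → X)
    (hc : ∀ n, Continuous (f n)) (hper : ∀ n, 1 ≤ n → f (n + k) = f n)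
    (herg : ∀ U V : Set X, IsOpen U → IsOpen V → U.Nonempty → V.Nonempty →
      0 < upperDensity {n : ℕ | ((ncomp f 1 k)^[n] '' U ∩ V).Nonempty}) :
    ∀ U V : Set X, IsOpen U → IsOpen V → U.Nonempty → V.Nonempty →
      0 < upperDensity {m : ℕ | (ncomp f 1 m '' U ∩ V).Nonempty} := by
  classical
  intro U V hU hV hUne hVne
  set S : Set ℕ := {n : ℕ | ((ncomp f 1 k)^[n] '' U ∩ V).Nonempty} with hS
  set T : Set ℕ := {m : ℕ | (ncomp f 1 m '' U ∩ V).Nonempty} with hT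
  have hd : 0 < upperDensity S := herg U V hU hV hUne hVne
  set a : ℕ → ℝ := fun n => (((Finset.range n).filter (· ∈ S)).card : ℝ) / n with ha
  set b : ℕ → ℝ := fun n => (((Finset.range n).filter (· ∈ T)).card : ℝ) / n with hb
  have hb0 : ∀ n, 0 ≤ b n := fun n => by positivity
  have hb1 : ∀ n, b n ≤ 1 := by
    intro n
    rcases Nat.eq_zero_or_pos n with h | h
    · simp [hb, h]
    · rw [hb, div_le_one (by exact_mod_cast h)]
      exact_mod_cast (Finset.card_filter_le _ _).trans_eq (Finset.card_range n)
  have ha0 : ∀ n, 0 ≤ a n := fun n => by positivity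
  -- counting: a n / k ≤ b (k*n)
  have key : ∀ n, a n / k ≤ b (k * n) := by
    intro n
    have hcard : ((Finset.range n).filter (· ∈ S)).card ≤
        ((Finset.range (k * n)).filter (· ∈ T)).card := by
      apply Finset.card_le_card_of_injOn (fun j => k * j)
      · intro j hj
        simp only [Finset.mem_coe, Finset.mem_filter, Finset.mem_range] at hj ⊢
        refine ⟨mul_lt_mul_of_pos_left hj.1 (by omega), ?_⟩
        have := hj.2
        simp only [hS, Set.mem_setOf_eq] at this
        simp only [hT, Set.mem_setOf_eq]
        rwa [ncomp_mul k f hper]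
      · intro x _ y _ h
        exact Nat.eq_of_mul_eq_mul_left (by omega) h
    rcases Nat.eq_zero_or_pos n with h | h
    · simp [ha, hb, h]
    · rw [ha, hb, div_div]
      simp only [Nat.cast_mul]
      rw [mul_comm (n : ℝ)]
      gcongr ?_ / ?_
      · exact_mod_cast hcard
  -- from frequently a_n large to limsup b > 0
  have hbdd : IsBoundedUnder (· ≤ ·) atTop b := ⟨1, eventually_map.2 (Eventually.of_forall hb1)⟩
  have hcobdd : IsCoboundedUnder (· ≤ ·) atTop a :=
    IsBoundedUnder.isCoboundedUnder_le ⟨0, eventually_map.2 (Eventually.of_forall ha0)⟩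
  have hfreq : ∃ᶠ n in atTop, upperDensity S / 2 < a n := by
    apply Filter.frequently_lt_of_lt_limsup hcobdd
    have : upperDensity S = limsup a atTop := rfl
    rw [← this]
    linarith
  have hfreq2 : ∃ᶠ m in atTop, upperDensity S / (2 * k) ≤ b m := by
    have htend : Tendsto (fun n : ℕ => k * n) atTop atTop :=
      Tendsto.const_mul_atTop' (by omega) tendsto_id
    apply htend.frequently
    apply hfreq.mono
    intro n hn
    have hk' : (0:ℝ) < k := by exact_mod_cast hk
    calc upperDensity S / (2 * k) = (upperDensity S / 2) / k := by ring
      _ ≤ a n / k := by gcongr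
      _ ≤ b (k * n) := key n
  have : upperDensity S / (2 * k) ≤ upperDensity T :=
    le_limsup_of_frequently_le hfreq2 hbdd
  have hk' : (0:ℝ) < k := by exact_mod_cast hk
  have : 0 < upperDensity S / (2 * k) := by positivity
  linarith
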